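/- Cluster Lemma: Let φ : P → Q be an order-preserving map of posets, and suppose that for each q ∈ Q the subposet φ^{-1}(q) carries an acyclic matching M_q. Then the union ⊔_{q ∈ Q} M_q is an acyclic matching on P. -/

import Mathlib

/-- A partial matching on a poset `P`: a set of pairs `(a,b)` with `b` covering
`a`, each element of `P` belonging to at most one pair. -/
def IsMatching {P : Type*} [PartialOrder P] (M : Set (P × P)) : Prop :=
  (∀ p ∈ M, p.1 ⋖ p.2) ∧
  (∀ p ∈ M, ∀ q ∈ M,
    (p.1 = q.1 ∨ p.1 = q.2 ∨ p.2 = q.1 ∨ p.2 = q.2) → p = q)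

/-- An alternating cycle `a₁ ≺ u(a₁) ≻ a₂ ≺ u(a₂) ≻ ⋯ ≺ u(a_m) ≻ a₁` with
`m ≥ 2` and the `aᵢ` distinct. -/
def HasCycle {P : Type*} [PartialOrder P] (M : Set (P × P)) : Prop :=
  ∃ m : ℕ, ∃ a b : Fin (m + 2) → P,
    Function.Injective a ∧ (∀ i, (a i, b i) ∈ M) ∧ ∀ i, a (i + 1) ⋖ b i

/-- Cluster Lemma: If `φ : P → Q` is order-preserving and each
fiber `φ⁻¹(q)` carries an acyclic matching `M q` (whose pairs lie in the fiber,
with covering relations those of `P`), then `⋃ q, M q` is an acyclic matching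
on `P`. -/
theorem cluster_lemma {P Q : Type*} [PartialOrder P] [PartialOrder Q]
    (φ : P → Q) (hφ : Monotone φ)
    (M : Q → Set (P × P))
    (hfiber : ∀ q, ∀ p ∈ M q, φ p.1 = q ∧ φ p.2 = q)
    (hmatch : ∀ q, IsMatching (M q))
    (hacyclic : ∀ q, ¬ HasCycle (M q)) :
    IsMatching (⋃ q, M q) ∧ ¬ HasCycle (⋃ q, M q) := by
  constructor
  · constructor
    · rintro p hp
      obtain ⟨q, hq⟩ := Set.mem_iUnion.mp hp
      exact (hmatch q).1 p hq
    · rintro p hp r hr h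
      obtain ⟨q, hq⟩ := Set.mem_iUnion.mp hp
      obtain ⟨q', hq'⟩ := Set.mem_iUnion.mp hr
      have hpq := hfiber q p hq
      have hrq := hfiber q' r hq'
      have : q = q' := by
        rcases h with h | h | h | h
        · rw [← hpq.1, ← hrq.1, h]
        · rw [← hpq.1, ← hrq.2, h]
        · rw [← hpq.2, ← hrq.1, h]
        · rw [← hpq.2, ← hrq.2, h]
      subst this
      exact (hmatch q).2 p hq r hq' h
  · rintro ⟨m, a, b, hinj, hmem, hcov⟩
    choose f hf using fun i => Set.mem_iUnion.mp (hmem i)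
    have hfa : ∀ i, φ (a i) = f i := fun i => (hfiber (f i) _ (hf i)).1
    have hfb : ∀ i, φ (b i) = f i := fun i => (hfiber (f i) _ (hf i)).2
    have hdec : ∀ i : Fin (m + 2), φ (a (i + 1)) ≤ φ (a i) := fun i => by
      calc φ (a (i + 1)) ≤ φ (b i) := hφ (hcov i).1.le
        _ = φ (a i) := by rw [hfb, hfa]
    open Fin.NatCast in
    have key : ∀ k l : ℕ, φ (a ((k + l : ℕ) : Fin (m + 2))) ≤ φ (a (k : Fin (m + 2))) := by
      intro k l
      induction l with
      | zero => simp
      | succ n ih =>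
        have h1 : ((k + (n + 1) : ℕ) : Fin (m + 2)) = ((k + n : ℕ) : Fin (m + 2)) + 1 := by
          exact Nat.cast_succ (k + n)
        rw [h1]
        exact le_trans (hdec _) ih
    open Fin.NatCast in
    have hconst : ∀ i : Fin (m + 2), φ (a i) = φ (a 0) := by
      intro i
      have h1 : φ (a i) ≤ φ (a 0) := by
        have := key 0 i.val
        simpa using this
      have h2 : φ (a 0) ≤ φ (a i) := by
        have := key i.val (m + 2 - i.val)
        have hv : ((i.val + (m + 2 - i.val) : ℕ) : Fin (m + 2)) = 0 := by
          rw [Nat.add_sub_cancel' i.isLt.le]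
          simp
        rw [hv] at this
        simpa using this
      exact le_antisymm h1 h2
    apply hacyclic (φ (a 0))
    refine ⟨m, a, b, hinj, fun i => ?_, hcov⟩
    have : f i = φ (a 0) := by rw [← hfa i, hconst i]
    rw [← this]
    exact hf i
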